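/- For any two closed bounded intervals I = [a,b] and J = [c,d] with a < b and c < d, there exists a C¹ orientation-preserving diffeomorphism φ_{I,J}: I → J with φ_{I,J}(a) = c, φ_{I,J}(b) = d, φ_{I,J}'(a) = φ_{I,J}'(b) = 1, and such that for every ε > 0 there is δ > 0 with |φ_{I,J}'(x) − 1| < ε for all x ∈ I whenever |((d−c)/(b−a)) − 1| < δ, and moreover the family satisfies the equivariance φ_{I,K} = φ_{J,K} ∘ φ_{I,J} for any third interval K. -/

import Mathlib

open Set MeasureTheory
open scoped NNReal

/-- Orientation-preserving homeomorphisms of ℝ, modelled as order-isomorphisms of ℝ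
(every order-isomorphism of ℝ is a strictly increasing homeomorphism and conversely). -/
abbrev HomeoR := ℝ ≃o ℝ

/-- The fixed point set of `f`. -/
def FixSet (f : HomeoR) : Set ℝ := {x : ℝ | f x = x}

/-- `f` and `g` are crossed with `f` in the distinguished role: there is an interval
`(a,b)` with endpoints possibly `±∞` such that `Fix(f) ∩ [a,b] = {a,b}` while `g`
maps `a` or `b` into `(a,b)`. -/
def CrossedAt (f g : HomeoR) : Prop :=
  ∃ a b : EReal, a < b ∧
    ({x : ℝ | a ≤ (x : EReal) ∧ (x : EReal) ≤ b} ∩ FixSet f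
      = {x : ℝ | (x : EReal) = a ∨ (x : EReal) = b}) ∧
    (∃ x : ℝ, ((x : EReal) = a ∨ (x : EReal) = b) ∧
      a < (g x : EReal) ∧ (g x : EReal) < b)

/-- Two elements are crossed. -/
def Crossed (f g : HomeoR) : Prop := CrossedAt f g ∨ CrossedAt g f

/-- `μ` is a (nonzero) `G`-invariant Radon measure on ℝ. -/
def InvariantRadon (G : Subgroup HomeoR) (μ : Measure ℝ) : Prop :=
  μ ≠ 0 ∧ IsFiniteMeasureOnCompacts μ ∧ ∀ g ∈ G, Measure.map (⇑g) μ = μ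

/-- `Λ` is a nonempty minimal closed `G`-invariant subset of ℝ. -/
def MinimalSet (G : Subgroup HomeoR) (Λ : Set ℝ) : Prop :=
  Λ.Nonempty ∧ IsClosed Λ ∧ (∀ g ∈ G, ⇑g '' Λ = Λ) ∧
    ∀ Λ' ⊆ Λ, Λ'.Nonempty → IsClosed Λ' → (∀ g ∈ G, ⇑g '' Λ' = Λ') → Λ' = Λ


section YoccozAux
open Filter Topology

noncomputable def yth (a b x : ℝ) : ℝ := Real.pi * (x - (a+b)/2) / (b-a)

noncomputable def yf (a b c d x : ℝ) : ℝ :=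
  (c+d)/2 + ((d-c)/Real.pi) * Real.arctan (((d-c)/(b-a)) * Real.tan (yth a b x))

noncomputable def yphi (a b c d x : ℝ) : ℝ :=
  if x ≤ a then c else if b ≤ x then d else yf a b c d x

noncomputable def yD (a b c d x : ℝ) : ℝ :=
  if x ≤ a then 1 else if b ≤ x then 1 else
    ((d-c)/(b-a))^2 * (1 + Real.tan (yth a b x)^2) /
      (1 + ((d-c)/(b-a))^2 * Real.tan (yth a b x)^2)

section basic
variable {a b c d : ℝ} (hab : a < b) (hcd : c < d)

lemma yth_mem (hab : a < b) {x : ℝ} (hx : x ∈ Ioo a b) :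
    yth a b x ∈ Ioo (-(Real.pi/2)) (Real.pi/2) := by
  have hba : (0:ℝ) < b - a := by linarith [hx.1, hx.2]
  have hpi := Real.pi_pos
  constructor
  · rw [yth, neg_lt, ← neg_div, div_lt_iff₀ hba]
    nlinarith [hx.1]
  · rw [yth, div_lt_iff₀ hba]
    nlinarith [hx.2]

lemma yphi_eq_yf (hab : a < b) {x : ℝ} (hx : x ∈ Ioo a b) :
    yphi a b c d x = yf a b c d x := by
  rw [yphi, if_neg (not_le.2 hx.1), if_neg (not_le.2 hx.2)]

lemma yD_eq (hab : a < b) {x : ℝ} (hx : x ∈ Ioo a b) :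
    yD a b c d x = ((d-c)/(b-a))^2 * (1 + Real.tan (yth a b x)^2) /
      (1 + ((d-c)/(b-a))^2 * Real.tan (yth a b x)^2) := by
  rw [yD, if_neg (not_le.2 hx.1), if_neg (not_le.2 hx.2)]

lemma yD_pos (hab : a < b) (hcd : c < d) (x : ℝ) : 0 < yD a b c d x := by
  have hba : (0:ℝ) < b - a := by linarith
  have hdc : (0:ℝ) < d - c := by linarith
  have hr : 0 < (d-c)/(b-a) := div_pos hdc hba
  rw [yD]
  split_ifs with h1 h2
  · norm_num
  · norm_num
  · have hu := sq_nonneg (Real.tan (yth a b x))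
    apply div_pos
    · positivity
    · positivity

lemma yD_sub_one_bound (hab : a < b) (hcd : c < d) (x : ℝ) :
    |yD a b c d x - 1| ≤ |((d-c)/(b-a))^2 - 1| := by
  rw [yD]
  split_ifs with h1 h2
  · simp
  · simp
  · set r := (d-c)/(b-a)
    set u := Real.tan (yth a b x)
    have hden : (0:ℝ) < 1 + r^2 * u^2 := by positivity
    have key : r^2 * (1+u^2) / (1 + r^2*u^2) - 1 = (r^2 - 1) / (1 + r^2*u^2) := by
      field_simp; ring
    rw [key, abs_div, abs_of_pos hden]
    apply div_le_of_le_mul₀ (le_of_lt hden) (abs_nonneg _)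
    nlinarith [abs_nonneg (r^2-1), sq_nonneg (r*u)]

lemma alg2 (l p dc u : ℝ) (hl : l ≠ 0) (hp : p ≠ 0)
    (h1 : 1 + (dc/l)^2*u^2 ≠ 0) :
    (dc/l)^2*(1+u^2)/(1+(dc/l)^2*u^2)
      = dc/p * (1/(1+((dc/l)*u)^2) * ((dc/l) * ((1+u^2) * (p/l)))) := by
  have h3 : l^2 + dc^2*u^2 ≠ 0 := by
    intro h; apply h1; field_simp [pow_ne_zero 2 hl]; linear_combination h
  field_simp

lemma hasDerivAt_yf (hab : a < b) {x : ℝ} (hx : x ∈ Ioo a b) :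
    HasDerivAt (yf a b c d) (yD a b c d x) x := by
  have hba : (0:ℝ) < b - a := by linarith
  have hθ : HasDerivAt (yth a b) (Real.pi / (b-a)) x := by
    have : HasDerivAt (fun y : ℝ => Real.pi * (y - (a+b)/2) / (b-a))
        (Real.pi * 1 / (b-a)) x :=
      (((hasDerivAt_id x).sub_const _).const_mul Real.pi).div_const _
    rw [mul_one] at this
    exact this
  have hcos : Real.cos (yth a b x) ≠ 0 :=
    (Real.cos_pos_of_mem_Ioo (yth_mem hab hx)).ne'
  have htan : HasDerivAt (fun y => Real.tan (yth a b y))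
      (1 / Real.cos (yth a b x)^2 * (Real.pi/(b-a))) x :=
    (Real.hasDerivAt_tan hcos).comp x hθ
  have hmul : HasDerivAt (fun y => ((d-c)/(b-a)) * Real.tan (yth a b y))
      (((d-c)/(b-a)) * (1 / Real.cos (yth a b x)^2 * (Real.pi/(b-a)))) x :=
    htan.const_mul _
  have harc : HasDerivAt (fun y => Real.arctan (((d-c)/(b-a)) * Real.tan (yth a b y)))
      (1 / (1 + (((d-c)/(b-a))*Real.tan (yth a b x))^2) *
        (((d-c)/(b-a)) * (1 / Real.cos (yth a b x)^2 * (Real.pi/(b-a))))) x :=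
    (Real.hasDerivAt_arctan _).comp x hmul
  have hfull : HasDerivAt (yf a b c d)
      ((d-c)/Real.pi * (1 / (1 + (((d-c)/(b-a))*Real.tan (yth a b x))^2) *
        (((d-c)/(b-a)) * (1 / Real.cos (yth a b x)^2 * (Real.pi/(b-a)))))) x :=
    (harc.const_mul ((d-c)/Real.pi)).const_add _
  convert hfull using 1
  have hsec : 1 / Real.cos (yth a b x)^2 = 1 + Real.tan (yth a b x)^2 := by
    rw [one_div, ← Real.inv_one_add_tan_sq hcos, inv_inv]
  have hden : (1:ℝ) + ((d-c)/(b-a))^2*Real.tan (yth a b x)^2 ≠ 0 := by positivity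
  rw [yD_eq hab hx, hsec]
  exact alg2 (b-a) Real.pi (d-c) (Real.tan (yth a b x)) hba.ne' Real.pi_ne_zero hden

end basic


section limits
variable {a b c d : ℝ}

lemma yth_a (hab : a < b) : yth a b a = -(Real.pi/2) := by
  rw [yth]; have h : b - a ≠ 0 := sub_ne_zero.2 hab.ne'
  rw [div_eq_iff h]; ring

lemma yth_b (hab : a < b) : yth a b b = Real.pi/2 := by
  rw [yth]; have h : b - a ≠ 0 := sub_ne_zero.2 hab.ne'
  rw [div_eq_iff h]; ring

lemma continuous_yth : Continuous (yth a b) := by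
  unfold yth; fun_prop

lemma yth_lt (hab : a < b) {x y : ℝ} (hxy : x < y) : yth a b x < yth a b y := by
  have hba : (0:ℝ) < b - a := by linarith
  have hpi := Real.pi_pos
  unfold yth
  gcongr

lemma tendsto_yth_a (hab : a < b) :
    Tendsto (yth a b) (𝓝[>] a) (𝓝[>] (-(Real.pi/2))) := by
  rw [tendsto_nhdsWithin_iff]
  refine ⟨?_, ?_⟩
  · have h := (continuous_yth (a := a) (b := b)).continuousAt (x := a)
    rw [ContinuousAt, yth_a hab] at h
    exact h.mono_left nhdsWithin_le_nhds
  · filter_upwards [eventually_mem_nhdsWithin] with x (hx : a < x)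
    rw [mem_Ioi, ← yth_a hab]
    exact yth_lt hab hx

lemma tendsto_yth_b (hab : a < b) :
    Tendsto (yth a b) (𝓝[<] b) (𝓝[<] (Real.pi/2)) := by
  rw [tendsto_nhdsWithin_iff]
  refine ⟨?_, ?_⟩
  · have h := (continuous_yth (a := a) (b := b)).continuousAt (x := b)
    rw [ContinuousAt, yth_b hab] at h
    exact h.mono_left nhdsWithin_le_nhds
  · filter_upwards [eventually_mem_nhdsWithin] with x (hx : x < b)
    rw [mem_Iio, ← yth_b hab]
    exact yth_lt hab hx

lemma tendsto_v_a (hab : a < b) (hcd : c < d) :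
    Tendsto (fun x => ((d-c)/(b-a)) * Real.tan (yth a b x)) (𝓝[>] a) atBot := by
  have hr : 0 < (d-c)/(b-a) := div_pos (by linarith) (by linarith)
  rw [tendsto_const_mul_atBot_of_pos hr]
  exact Real.tendsto_tan_neg_pi_div_two.comp (tendsto_yth_a hab)

lemma tendsto_v_b (hab : a < b) (hcd : c < d) :
    Tendsto (fun x => ((d-c)/(b-a)) * Real.tan (yth a b x)) (𝓝[<] b) atTop := by
  have hr : 0 < (d-c)/(b-a) := div_pos (by linarith) (by linarith)
  rw [tendsto_const_mul_atTop_of_pos hr]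
  exact Real.tendsto_tan_pi_div_two.comp (tendsto_yth_b hab)

lemma tendsto_yf_a (hab : a < b) (hcd : c < d) :
    Tendsto (yf a b c d) (𝓝[>] a) (𝓝 c) := by
  have harc : Tendsto (fun x => Real.arctan (((d-c)/(b-a)) * Real.tan (yth a b x)))
      (𝓝[>] a) (𝓝 (-(Real.pi/2))) :=
    (Real.tendsto_arctan_atBot.comp (tendsto_v_a hab hcd)).mono_right nhdsWithin_le_nhds
  have h := (harc.const_mul ((d-c)/Real.pi)).const_add ((c+d)/2)
  have hval : (c+d)/2 + (d-c)/Real.pi * (-(Real.pi/2)) = c := by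
    have h0 := Real.pi_ne_zero; field_simp; ring
  have heq : 𝓝 c = 𝓝 ((c+d)/2 + (d-c)/Real.pi * (-(Real.pi/2))) := by rw [hval]
  rw [heq]
  exact h

lemma tendsto_yf_b (hab : a < b) (hcd : c < d) :
    Tendsto (yf a b c d) (𝓝[<] b) (𝓝 d) := by
  have harc : Tendsto (fun x => Real.arctan (((d-c)/(b-a)) * Real.tan (yth a b x)))
      (𝓝[<] b) (𝓝 (Real.pi/2)) :=
    (Real.tendsto_arctan_atTop.comp (tendsto_v_b hab hcd)).mono_right nhdsWithin_le_nhds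
  have h := (harc.const_mul ((d-c)/Real.pi)).const_add ((c+d)/2)
  have hval : (c+d)/2 + (d-c)/Real.pi * (Real.pi/2) = d := by
    have h0 := Real.pi_ne_zero; field_simp; ring
  have heq : 𝓝 d = 𝓝 ((c+d)/2 + (d-c)/Real.pi * (Real.pi/2)) := by rw [hval]
  rw [heq]
  exact h

lemma tend_frac {α : Type*} {l : Filter α} {w : α → ℝ} (K : ℝ)
    (h : Tendsto w l atTop) :
    Tendsto (fun x => (K + w x)/(1 + w x)) l (𝓝 1) := by
  have h1 : Tendsto (fun x => 1 + w x) l atTop := tendsto_atTop_add_const_left _ 1 h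
  have h0 : Tendsto (fun x => (K-1)/(1 + w x) + 1) l (𝓝 (0 + 1)) :=
    (h1.const_div_atTop (K-1)).add tendsto_const_nhds
  rw [zero_add] at h0
  refine h0.congr' ?_
  filter_upwards [h1.eventually_gt_atTop 0] with x hx
  field_simp
  ring

lemma sq_tendsto_atTop_of_atBot {α : Type*} {l : Filter α} {v : α → ℝ}
    (h : Tendsto v l atBot) : Tendsto (fun x => (v x)^2) l atTop := by
  have habs : Tendsto (fun x => |v x|) l atTop := tendsto_abs_atBot_atTop.comp h
  have := (tendsto_pow_atTop (two_ne_zero)).comp habs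
  refine this.congr fun x => ?_
  simp [Function.comp, sq_abs]

lemma sq_tendsto_atTop_of_atTop {α : Type*} {l : Filter α} {v : α → ℝ}
    (h : Tendsto v l atTop) : Tendsto (fun x => (v x)^2) l atTop := by
  have habs : Tendsto (fun x => |v x|) l atTop := tendsto_abs_atTop_atTop.comp h
  have := (tendsto_pow_atTop (two_ne_zero)).comp habs
  refine this.congr fun x => ?_
  simp [Function.comp, sq_abs]

lemma yD_eq_frac (hab : a < b) {x : ℝ} (hx : x ∈ Ioo a b) :
    yD a b c d x = (((d-c)/(b-a))^2 + (((d-c)/(b-a)) * Real.tan (yth a b x))^2) /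
      (1 + (((d-c)/(b-a)) * Real.tan (yth a b x))^2) := by
  rw [yD_eq hab hx, mul_pow]; ring_nf

lemma tendsto_yD_a (hab : a < b) (hcd : c < d) :
    Tendsto (yD a b c d) (𝓝[>] a) (𝓝 1) := by
  have hsq := sq_tendsto_atTop_of_atBot (tendsto_v_a (c := c) (d := d) hab hcd)
  refine (tend_frac (((d-c)/(b-a))^2) hsq).congr' ?_
  filter_upwards [Ioo_mem_nhdsGT hab] with x hx
  exact (yD_eq_frac hab hx).symm

lemma tendsto_yD_b (hab : a < b) (hcd : c < d) :
    Tendsto (yD a b c d) (𝓝[<] b) (𝓝 1) := by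
  have hsq := sq_tendsto_atTop_of_atTop (tendsto_v_b (c := c) (d := d) hab hcd)
  refine (tend_frac (((d-c)/(b-a))^2) hsq).congr' ?_
  filter_upwards [Ioo_mem_nhdsLT hab] with x hx
  exact (yD_eq_frac hab hx).symm

end limits

section main
variable {a b c d e k : ℝ}

lemma yphi_a : yphi a b c d a = c := if_pos le_rfl

lemma yphi_b (hab : a < b) : yphi a b c d b = d := by
  rw [yphi, if_neg (not_le.2 hab), if_pos le_rfl]

lemma yD_a : yD a b c d a = 1 := if_pos le_rfl

lemma yD_b (hab : a < b) : yD a b c d b = 1 := by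
  rw [yD, if_neg (not_le.2 hab), if_pos le_rfl]

lemma yphi_eventuallyEq (hab : a < b) {x : ℝ} (hx : x ∈ Ioo a b) :
    yphi a b c d =ᶠ[𝓝 x] yf a b c d :=
  (isOpen_Ioo.eventually_mem hx).mono fun y hy => yphi_eq_yf hab hy

lemma hasDerivAt_yphi (hab : a < b) {x : ℝ} (hx : x ∈ Ioo a b) :
    HasDerivAt (yphi a b c d) (yD a b c d x) x :=
  (hasDerivAt_yf hab hx).congr_of_eventuallyEq (yphi_eventuallyEq hab hx)

lemma continuousAt_yphi_a (hab : a < b) (hcd : c < d) :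
    ContinuousAt (yphi a b c d) a := by
  rw [ContinuousAt, yphi_a, ← nhdsLE_sup_nhdsGT a, tendsto_sup]
  constructor
  · refine tendsto_const_nhds.congr' ?_
    filter_upwards [eventually_mem_nhdsWithin] with x (hx : x ≤ a)
    exact (if_pos hx).symm
  · refine (tendsto_yf_a hab hcd).congr' ?_
    filter_upwards [Ioo_mem_nhdsGT hab] with x hx
    exact (yphi_eq_yf hab hx).symm

lemma continuousAt_yphi_b (hab : a < b) (hcd : c < d) :
    ContinuousAt (yphi a b c d) b := by
  rw [ContinuousAt, yphi_b hab, ← nhdsLT_sup_nhdsGE b, tendsto_sup]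
  constructor
  · refine (tendsto_yf_b hab hcd).congr' ?_
    filter_upwards [Ioo_mem_nhdsLT hab] with x hx
    exact (yphi_eq_yf hab hx).symm
  · refine tendsto_const_nhds.congr' ?_
    filter_upwards [eventually_mem_nhdsWithin] with x (hx : b ≤ x)
    rw [yphi, if_neg (not_le.2 (lt_of_lt_of_le hab hx)), if_pos hx]

lemma continuousAt_yD_a (hab : a < b) (hcd : c < d) :
    ContinuousAt (yD a b c d) a := by
  rw [ContinuousAt, yD_a, ← nhdsLE_sup_nhdsGT a, tendsto_sup]
  constructor
  · refine tendsto_const_nhds.congr' ?_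
    filter_upwards [eventually_mem_nhdsWithin] with x (hx : x ≤ a)
    exact (if_pos hx).symm
  · exact tendsto_yD_a hab hcd

lemma continuousAt_yD_b (hab : a < b) (hcd : c < d) :
    ContinuousAt (yD a b c d) b := by
  rw [ContinuousAt, yD_b hab, ← nhdsLT_sup_nhdsGE b, tendsto_sup]
  constructor
  · exact tendsto_yD_b hab hcd
  · refine tendsto_const_nhds.congr' ?_
    filter_upwards [eventually_mem_nhdsWithin] with x (hx : b ≤ x)
    rw [yD, if_neg (not_le.2 (lt_of_lt_of_le hab hx)), if_pos hx]

lemma continuousAt_yD_interior (hab : a < b) (hcd : c < d) {x : ℝ} (hx : x ∈ Ioo a b) :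
    ContinuousAt (yD a b c d) x := by
  have hcos : Real.cos (yth a b x) ≠ 0 :=
    (Real.cos_pos_of_mem_Ioo (yth_mem hab hx)).ne'
  have htan : ContinuousAt (fun y => Real.tan (yth a b y)) x :=
    (Real.continuousAt_tan.2 hcos).comp continuous_yth.continuousAt
  have hden : (1:ℝ) + ((d-c)/(b-a))^2 * Real.tan (yth a b x)^2 ≠ 0 := by positivity
  have hform : ContinuousAt (fun y => ((d-c)/(b-a))^2 * (1 + Real.tan (yth a b y)^2) /
      (1 + ((d-c)/(b-a))^2 * Real.tan (yth a b y)^2)) x :=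
    (continuousAt_const.mul (continuousAt_const.add (htan.pow 2))).div
      (continuousAt_const.add (continuousAt_const.mul (htan.pow 2))) hden
  refine hform.congr ?_
  filter_upwards [isOpen_Ioo.eventually_mem hx] with y hy
  exact (yD_eq hab hy).symm

lemma continuousOn_yphi (hab : a < b) (hcd : c < d) :
    ContinuousOn (yphi a b c d) (Icc a b) := by
  intro x hx
  rcases eq_or_lt_of_le hx.1 with h1 | h1
  · subst h1; exact (continuousAt_yphi_a hab hcd).continuousWithinAt
  rcases eq_or_lt_of_le hx.2 with h2 | h2
  · subst h2; exact (continuousAt_yphi_b hab hcd).continuousWithinAt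
  · exact (hasDerivAt_yphi hab ⟨h1, h2⟩).continuousAt.continuousWithinAt

lemma continuousOn_yD (hab : a < b) (hcd : c < d) :
    ContinuousOn (yD a b c d) (Icc a b) := by
  intro x hx
  rcases eq_or_lt_of_le hx.1 with h1 | h1
  · subst h1; exact (continuousAt_yD_a hab hcd).continuousWithinAt
  rcases eq_or_lt_of_le hx.2 with h2 | h2
  · subst h2; exact (continuousAt_yD_b hab hcd).continuousWithinAt
  · exact (continuousAt_yD_interior hab hcd ⟨h1, h2⟩).continuousWithinAt

lemma hasDerivWithinAt_yphi (hab : a < b) (hcd : c < d) {x : ℝ} (hx : x ∈ Icc a b) :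
    HasDerivWithinAt (yphi a b c d) (yD a b c d x) (Icc a b) x := by
  have hdiff : DifferentiableOn ℝ (yphi a b c d) (Ioo a b) := fun y hy =>
    (hasDerivAt_yphi hab hy).differentiableAt.differentiableWithinAt
  rcases eq_or_lt_of_le hx.1 with h1 | h1
  · subst h1
    rw [yD_a]
    have hderiv : Tendsto (fun y => deriv (yphi a b c d) y) (𝓝[>] a) (𝓝 1) := by
      refine (tendsto_yD_a hab hcd).congr' ?_
      filter_upwards [Ioo_mem_nhdsGT hab] with y hy
      exact ((hasDerivAt_yphi hab hy).deriv).symm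
    exact (hasDerivWithinAt_Ici_of_tendsto_deriv hdiff
      (continuousAt_yphi_a hab hcd).continuousWithinAt
      (Ioo_mem_nhdsGT hab) hderiv).mono Icc_subset_Ici_self
  rcases eq_or_lt_of_le hx.2 with h2 | h2
  · subst h2
    rw [yD_b hab]
    have hderiv : Tendsto (fun y => deriv (yphi a x c d) y) (𝓝[<] x) (𝓝 1) := by
      refine (tendsto_yD_b hab hcd).congr' ?_
      filter_upwards [Ioo_mem_nhdsLT hab] with y hy
      exact ((hasDerivAt_yphi hab hy).deriv).symm
    exact (hasDerivWithinAt_Iic_of_tendsto_deriv hdiff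
      (continuousAt_yphi_b hab hcd).continuousWithinAt
      (Ioo_mem_nhdsLT hab) hderiv).mono Icc_subset_Iic_self
  · exact (hasDerivAt_yphi hab ⟨h1, h2⟩).hasDerivWithinAt

lemma derivWithin_yphi_eq (hab : a < b) (hcd : c < d) {x : ℝ} (hx : x ∈ Icc a b) :
    derivWithin (yphi a b c d) (Icc a b) x = yD a b c d x :=
  (hasDerivWithinAt_yphi hab hcd hx).derivWithin (uniqueDiffOn_Icc hab x hx)

lemma yphi_mem_Ioo (hab : a < b) (hcd : c < d) {x : ℝ} (hx : x ∈ Ioo a b) :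
    yphi a b c d x ∈ Ioo c d := by
  rw [yphi_eq_yf hab hx, yf]
  have hpi := Real.pi_pos
  have hdc : (0:ℝ) < d - c := by linarith
  set A := Real.arctan (((d-c)/(b-a)) * Real.tan (yth a b x)) with hA
  have h1 := Real.neg_pi_div_two_lt_arctan (((d-c)/(b-a)) * Real.tan (yth a b x))
  have h2 := Real.arctan_lt_pi_div_two (((d-c)/(b-a)) * Real.tan (yth a b x))
  rw [← hA] at h1 h2
  constructor
  · have e1 : (c+d)/2 + (d-c)/Real.pi * A - c = (d-c)/Real.pi * (A + Real.pi/2) := by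
      field_simp; ring
    have e2 : 0 < (d-c)/Real.pi * (A + Real.pi/2) :=
      mul_pos (div_pos hdc hpi) (by linarith)
    linarith [e1 ▸ e2]
  · have e1 : d - ((c+d)/2 + (d-c)/Real.pi * A) = (d-c)/Real.pi * (Real.pi/2 - A) := by
      field_simp; ring
    have e2 : 0 < (d-c)/Real.pi * (Real.pi/2 - A) :=
      mul_pos (div_pos hdc hpi) (by linarith)
    linarith [e1 ▸ e2]

lemma yf_def {x : ℝ} : yf a b c d x
    = (c+d)/2 + ((d-c)/Real.pi) * Real.arctan (((d-c)/(b-a)) * Real.tan (yth a b x)) := rfl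

lemma yth_comp (hab : a < b) (hcd : c < d) {x : ℝ} :
    yth c d (yf a b c d x) = Real.arctan (((d-c)/(b-a)) * Real.tan (yth a b x)) := by
  rw [yth, yf]
  have hdc : d - c ≠ 0 := sub_ne_zero.2 hcd.ne'
  have hpi := Real.pi_ne_zero
  field_simp
  ring

lemma equivariance_interior (hab : a < b) (hcd : c < d) {x : ℝ} :
    yf c d e k (yf a b c d x) = yf a b e k x := by
  have hdc : d - c ≠ 0 := sub_ne_zero.2 hcd.ne'
  have hba : b - a ≠ 0 := sub_ne_zero.2 hab.ne'
  rw [yf_def (a := c) (b := d) (c := e) (d := k), yth_comp hab hcd, Real.tan_arctan]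
  rw [show ((k-e)/(d-c)) * (((d-c)/(b-a)) * Real.tan (yth a b x))
      = ((k-e)/(b-a)) * Real.tan (yth a b x) by field_simp]
  exact (yf_def (a := a) (b := b) (c := e) (d := k)).symm

end main

theorem yoccoz_family' : ∃ φ : ℝ → ℝ → ℝ → ℝ → (ℝ → ℝ),
    (∀ a b c d : ℝ, a < b → c < d →
      (φ a b c d a = c ∧ φ a b c d b = d ∧
       StrictMonoOn (φ a b c d) (Icc a b) ∧
       φ a b c d '' Icc a b = Icc c d ∧
       ContDiffOn ℝ 1 (φ a b c d) (Icc a b) ∧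
       (∀ x ∈ Icc a b, 0 < derivWithin (φ a b c d) (Icc a b) x) ∧
       derivWithin (φ a b c d) (Icc a b) a = 1 ∧
       derivWithin (φ a b c d) (Icc a b) b = 1)) ∧
    (∀ ε : ℝ, 0 < ε → ∃ δ : ℝ, 0 < δ ∧ ∀ a b c d : ℝ, a < b → c < d →
       |((d - c) / (b - a)) - 1| < δ →
       ∀ x ∈ Icc a b, |derivWithin (φ a b c d) (Icc a b) x - 1| < ε) ∧
    (∀ a b c d e k : ℝ, a < b → c < d → e < k →
       ∀ x ∈ Icc a b, φ a b e k x = φ c d e k (φ a b c d x)) := by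
  refine ⟨yphi, ?_, ?_, ?_⟩
  · intro a b c d hab hcd
    have smono : StrictMonoOn (yphi a b c d) (Icc a b) := by
      refine strictMonoOn_of_deriv_pos (convex_Icc a b) (continuousOn_yphi hab hcd) ?_
      intro x hx
      rw [interior_Icc] at hx
      rw [(hasDerivAt_yphi hab hx).deriv]
      exact yD_pos hab hcd x
    refine ⟨yphi_a, yphi_b hab, smono, ?_, ?_, ?_, ?_, ?_⟩
    · apply Subset.antisymm
      · rintro _ ⟨x, hx, rfl⟩
        constructor
        · have h := smono.monotoneOn (left_mem_Icc.2 hab.le) hx hx.1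
          rwa [yphi_a] at h
        · have h := smono.monotoneOn hx (right_mem_Icc.2 hab.le) hx.2
          rwa [yphi_b hab] at h
      · have h := intermediate_value_Icc hab.le (continuousOn_yphi hab hcd)
        rwa [yphi_a, yphi_b hab] at h
    · have hdiff : DifferentiableOn ℝ (yphi a b c d) (Icc a b) := fun x hx =>
        (hasDerivWithinAt_yphi hab hcd hx).differentiableWithinAt
      have hcont : ContinuousOn (derivWithin (yphi a b c d) (Icc a b)) (Icc a b) :=
        (continuousOn_yD hab hcd).congr fun x hx => derivWithin_yphi_eq hab hcd hx
      exact (contDiffOn_succ_iff_derivWithin (n := 0) (uniqueDiffOn_Icc hab)).2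
        ⟨hdiff, by simp, (contDiffOn_zero).2 hcont⟩
    · intro x hx; rw [derivWithin_yphi_eq hab hcd hx]; exact yD_pos hab hcd x
    · rw [derivWithin_yphi_eq hab hcd (left_mem_Icc.2 hab.le), yD_a]
    · rw [derivWithin_yphi_eq hab hcd (right_mem_Icc.2 hab.le), yD_b hab]
  · intro ε hε
    refine ⟨min 1 (ε/3), by positivity, ?_⟩
    intro a b c d hab hcd hr x hx
    rw [derivWithin_yphi_eq hab hcd hx]
    have hb := yD_sub_one_bound hab hcd x
    set r := (d-c)/(b-a) with hrdef
    have h1 : |r - 1| < 1 := lt_of_lt_of_le hr (min_le_left _ _)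
    have h2 : |r - 1| < ε/3 := lt_of_lt_of_le hr (min_le_right _ _)
    have h3 : |r^2 - 1| = |r-1| * |r+1| := by
      rw [show r^2 - 1 = (r-1)*(r+1) by ring, abs_mul]
    have habs := abs_lt.1 h1
    have h4 : |r+1| ≤ 3 := by
      rw [abs_le]; constructor <;> linarith [habs.1, habs.2]
    have h5 : |r^2-1| < ε := by
      rw [h3]
      nlinarith [abs_nonneg (r-1), abs_nonneg (r+1)]
    exact lt_of_le_of_lt hb h5
  · intro a b c d e k hab hcd hek x hx
    rcases eq_or_lt_of_le hx.1 with h1 | h1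
    · subst h1; simp only [yphi_a]
    rcases eq_or_lt_of_le hx.2 with h2 | h2
    · subst h2; rw [yphi_b hab, yphi_b hab, yphi_b hcd]
    · have hxin : x ∈ Ioo a b := ⟨h1, h2⟩
      have hyin : yphi a b c d x ∈ Ioo c d := yphi_mem_Ioo hab hcd hxin
      rw [yphi_eq_yf hcd hyin, yphi_eq_yf hab hxin, yphi_eq_yf hab hxin]
      exact (equivariance_interior hab hcd).symm

end YoccozAux

theorem yoccoz_family : ∃ φ : ℝ → ℝ → ℝ → ℝ → (ℝ → ℝ),
    (∀ a b c d : ℝ, a < b → c < d →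
      (φ a b c d a = c ∧ φ a b c d b = d ∧
       StrictMonoOn (φ a b c d) (Icc a b) ∧
       φ a b c d '' Icc a b = Icc c d ∧
       ContDiffOn ℝ 1 (φ a b c d) (Icc a b) ∧
       (∀ x ∈ Icc a b, 0 < derivWithin (φ a b c d) (Icc a b) x) ∧
       derivWithin (φ a b c d) (Icc a b) a = 1 ∧
       derivWithin (φ a b c d) (Icc a b) b = 1)) ∧
    (∀ ε : ℝ, 0 < ε → ∃ δ : ℝ, 0 < δ ∧ ∀ a b c d : ℝ, a < b → c < d →
       |((d - c) / (b - a)) - 1| < δ →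
       ∀ x ∈ Icc a b, |derivWithin (φ a b c d) (Icc a b) x - 1| < ε) ∧
    (∀ a b c d e k : ℝ, a < b → c < d → e < k →
       ∀ x ∈ Icc a b, φ a b e k x = φ c d e k (φ a b c d x)) := by
  exact yoccoz_family'
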